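/- arXiv:1702.04609 — 4 statements merged into one kernel-verified Lean document; each statement's English description precedes it below -/
import Mathlib

section
/- Let E be a finite-dimensional real inner product space and A : E → E a linear isometry satisfying A^k = id for some integer k ≥ 1. For each positive integer j set F_j = ker(A^j − id). If i and j are positive divisors of k and H denotes the intersection of F_i with the orthogonal complement of F_{gcd(i,j)} (that is, H = F_i ∩ F_{gcd(i,j)}^⊥), then H is contained in the orthogonal complement F_j^⊥ of F_j. -/
open scoped RealInnerProductSpace

lemma bezout_nat' (i j : ℕ) (hi : 0 < i) (hj : 0 < j) :
    ∃ a c : ℕ, a * i = Nat.gcd i j + c * j := by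
  have h := Nat.gcd_eq_gcd_ab i j
  set u := Nat.gcdA i j with hu
  set v := Nat.gcdB i j with hv
  set T : ℤ := u.natAbs + v.natAbs + 1 with hT
  have hT0 : 0 ≤ T := by positivity
  have hjT : T ≤ (j:ℤ) * T := le_mul_of_one_le_left hT0 (by exact_mod_cast hj)
  have hiT : T ≤ (i:ℤ) * T := le_mul_of_one_le_left hT0 (by exact_mod_cast hi)
  have ha : 0 ≤ u + (j:ℤ) * T := by omega
  have hc : 0 ≤ (i:ℤ) * T - v := by omega
  have key : (u + (j:ℤ) * T) * i = (Nat.gcd i j : ℤ) + ((i:ℤ) * T - v) * j := by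
    linear_combination -h
  refine ⟨(u + (j:ℤ) * T).toNat, ((i:ℤ) * T - v).toNat, ?_⟩
  have : (((u + (j:ℤ) * T).toNat * i : ℕ) : ℤ)
      = ((Nat.gcd i j + ((i:ℤ) * T - v).toNat * j : ℕ) : ℤ) := by
    push_cast [Int.toNat_of_nonneg ha, Int.toNat_of_nonneg hc]
    exact key
  exact_mod_cast this

/-- Let `E` be a finite-dimensional real inner product space and `A` a linear isometry
with `A^k = 1` for some `k ≥ 1`.  Set `F j = ker (A^j - 1)`.  If `i, j` are positive
divisors of `k` and `H = F i ⊓ (F (gcd i j))ᗮ`, then `H ≤ (F j)ᗮ`. -/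
theorem stmt2 {E : Type*} [NormedAddCommGroup E] [InnerProductSpace ℝ E]
    [FiniteDimensional ℝ E]
    (A : E →ₗ[ℝ] E) (hiso : ∀ x y : E, ⟪A x, A y⟫ = ⟪x, y⟫)
    (k : ℕ) (hk : 1 ≤ k) (hAk : A ^ k = 1)
    (F : ℕ → Submodule ℝ E) (hF : ∀ j, F j = LinearMap.ker (A ^ j - 1))
    (i j : ℕ) (hi : 0 < i) (hj : 0 < j) (hik : i ∣ k) (hjk : j ∣ k) :
    F i ⊓ (F (Nat.gcd i j))ᗮ ≤ (F j)ᗮ := by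
  -- membership characterization
  have hmem : ∀ (m : ℕ) (w : E), w ∈ F m ↔ (A ^ m) w = w := by
    intro m w
    rw [hF, LinearMap.mem_ker, LinearMap.sub_apply, Module.End.one_apply, sub_eq_zero]
  -- isometry for powers
  have hiso' : ∀ (n : ℕ) (x y : E), ⟪(A ^ n) x, (A ^ n) y⟫ = ⟪x, y⟫ := by
    intro n
    induction n with
    | zero => simp
    | succ n ih =>
      intro x y
      have : ∀ w : E, (A ^ (n+1)) w = (A ^ n) (A w) := by
        intro w; rw [pow_succ]; rfl
      rw [this x, this y, ih, hiso]
  -- fixed points of powers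
  have hfix : ∀ (m t : ℕ) (w : E), (A ^ m) w = w → (A ^ (m * t)) w = w := by
    intro m t w hw
    rw [pow_mul]
    induction t with
    | zero => simp
    | succ t ih =>
      have : ((A ^ m) ^ (t+1)) w = ((A ^ m) ^ t) ((A ^ m) w) := by
        rw [pow_succ]
        rfl
      rw [this, hw, ih]
  set g := Nat.gcd i j with hg
  intro x hx
  obtain ⟨hxi, hxg⟩ := Submodule.mem_inf.mp hx
  rw [Submodule.mem_orthogonal]
  intro y hy
  rw [hmem] at hxi hy
  -- N = k / i
  obtain ⟨N, hN⟩ := hik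
  have hN0 : 0 < N := by
    rcases Nat.eq_zero_or_pos N with h | h
    · subst h; simp at hN; omega
    · exact h
  set z : E := (N : ℝ)⁻¹ • ∑ t ∈ Finset.range N, (A ^ (i * t)) y with hz
  -- ⟪x, y⟫ = ⟪x, z⟫
  have hxz : ⟪x, z⟫ = ⟪x, y⟫ := by
    rw [hz, inner_smul_right, inner_sum]
    have heach : ∀ t ∈ Finset.range N, ⟪x, (A ^ (i * t)) y⟫ = ⟪x, y⟫ := by
      intro t _
      conv_lhs => rw [← hfix i t x hxi]
      rw [hiso']
    rw [Finset.sum_congr rfl heach, Finset.sum_const, Finset.card_range, nsmul_eq_mul]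
    rw [← mul_assoc, inv_mul_cancel₀ (by exact_mod_cast hN0.ne'), one_mul]
  -- composition of powers
  have hcomp : ∀ (a b : ℕ) (w : E), (A ^ a) ((A ^ b) w) = (A ^ (a + b)) w := by
    intro a b w
    rw [pow_add]; rfl
  -- z ∈ F i
  have hzi : (A ^ i) z = z := by
    rw [hz, map_smul, map_sum]
    congr 1
    have hterm : ∀ t, (A ^ i) ((A ^ (i * t)) y) = (A ^ (i * (t + 1))) y := by
      intro t
      rw [hcomp]
      congr 1
      ring
    rw [Finset.sum_congr rfl (fun t _ => hterm t)]
    have hfN : (A ^ (i * N)) y = (A ^ (i * 0)) y := by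
      rw [← hN, hAk]
      simp
    have h1 : ∑ t ∈ Finset.range (N + 1), (A ^ (i * t)) y
        = (∑ t ∈ Finset.range N, (A ^ (i * (t + 1))) y) + (A ^ (i * 0)) y :=
      Finset.sum_range_succ' _ N
    have h2 : ∑ t ∈ Finset.range (N + 1), (A ^ (i * t)) y
        = (∑ t ∈ Finset.range N, (A ^ (i * t)) y) + (A ^ (i * N)) y :=
      Finset.sum_range_succ _ N
    rw [hfN] at h2
    have := h1.symm.trans h2
    exact add_right_cancel this
  -- z ∈ F j
  have hzj : (A ^ j) z = z := by
    rw [hz, map_smul, map_sum]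
    congr 1
    refine Finset.sum_congr rfl fun t _ => ?_
    rw [hcomp, add_comm, ← hcomp, hy]
  -- z ∈ F g by Bezout
  have hzg : (A ^ g) z = z := by
    obtain ⟨a, c, hac⟩ := bezout_nat' i j hi hj
    have h1 : (A ^ (a * i)) z = z := by
      rw [mul_comm]; exact hfix i a z hzi
    have h2 : (A ^ (g + c * j)) z = z := by rw [← hac]; exact h1
    rw [← hcomp, mul_comm] at h2
    rwa [hfix j c z hzj] at h2
  -- conclude
  have hzFg : z ∈ F g := (hmem g z).2 hzg
  have h0 : ⟪z, x⟫ = 0 := hxg z hzFg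
  rw [real_inner_comm] at h0
  have hyavg : ⟪y, x⟫ = 0 := by
    rw [real_inner_comm, ← hxz, h0]
  exact hyavg
end

section
/- Let c > 0 and t₀ ∈ ℝ. Let g : ℝ → ℝ be a function which is twice differentiable on [t₀, ∞), with g(t) ≥ 0 for all t ≥ t₀, g(t) → 0 as t → +∞, and g''(t) ≥ 4c²·g(t) for all t ≥ t₀. Then there exist t₁ ≥ t₀ and B ≥ 0 such that g(t) ≤ B·e^{−2c·t} for all t ≥ t₁. -/
/-!
Put `k = 2c` and `h = g' + k g`. Then `h' - k h = g'' - k² g ≥ 0`, so `e^{-kt} h(t)` is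
nondecreasing. If `h(s) > 0` for some `s`, then `h ≥ h(s) > 0` from `s` on, and
`e^{kt} (g(t) - h(s)/k)` is nondecreasing, so `g(t) ≥ h(s)/k + C e^{-kt}`, against `g → 0`.
Hence `h ≤ 0`, i.e. `e^{kt} g(t)` is nonincreasing, which is the claimed decay.
-/

open Filter Set Real Topology

theorem monotoneOn_Ici_of_hasDerivAt {f f' : ℝ → ℝ} {a : ℝ}
    (hf : ∀ t ≥ a, HasDerivAt f (f' t) t) (hf' : ∀ t ≥ a, 0 ≤ f' t) :
    MonotoneOn f (Ici a) := by
  refine monotoneOn_of_hasDerivWithinAt_nonneg (f' := f') (convex_Ici a)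
    (fun t ht => (hf t ht).continuousAt.continuousWithinAt) (fun t ht => ?_) (fun t ht => ?_)
  · rw [interior_Ici] at ht
    exact (hf t (le_of_lt ht)).hasDerivWithinAt
  · rw [interior_Ici] at ht
    exact hf' t (le_of_lt ht)

theorem hasDerivAt_exp_mul_mul {f : ℝ → ℝ} {f' a t : ℝ} (hf : HasDerivAt f f' t) :
    HasDerivAt (fun t => exp (a * t) * f t) (exp (a * t) * (f' + a * f t)) t := by
  have hexp : HasDerivAt (fun t => exp (a * t)) (exp (a * t) * a) t :=
    ((hasDerivAt_id t).const_mul a).exp.congr_deriv (by simp)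
  exact (hexp.mul hf).congr_deriv (by ring)

theorem monotoneOn_exp_mul_mul {f f' : ℝ → ℝ} {a t₀ : ℝ}
    (hf : ∀ t ≥ t₀, HasDerivAt f (f' t) t) (h : ∀ t ≥ t₀, 0 ≤ f' t + a * f t) :
    MonotoneOn (fun t => exp (a * t) * f t) (Ici t₀) :=
  monotoneOn_Ici_of_hasDerivAt (fun t ht => hasDerivAt_exp_mul_mul (hf t ht))
    (fun t ht => mul_nonneg (exp_pos _).le (h t ht))

theorem antitoneOn_exp_mul_mul {f f' : ℝ → ℝ} {a t₀ : ℝ}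
    (hf : ∀ t ≥ t₀, HasDerivAt f (f' t) t) (h : ∀ t ≥ t₀, f' t + a * f t ≤ 0) :
    AntitoneOn (fun t => exp (a * t) * f t) (Ici t₀) := by
  have hneg := monotoneOn_exp_mul_mul (a := a) (fun t ht => (hf t ht).neg)
    (fun t ht => by simp only [Pi.neg_apply]; linarith [h t ht])
  intro s hs t ht hst
  simpa using hneg hs ht hst

theorem nonpos_of_tendsto_zero_of_le_deriv_add_mul {f f' : ℝ → ℝ} {k s ε : ℝ} (hk : 0 < k)
    (hf : ∀ t ≥ s, HasDerivAt f (f' t) t) (hlim : Tendsto f atTop (𝓝 0))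
    (h : ∀ t ≥ s, ε ≤ f' t + k * f t) : ε ≤ 0 := by
  have hmono := monotoneOn_exp_mul_mul (f := fun t => f t - ε / k) (a := k)
    (fun t ht => (hf t ht).sub_const (ε / k))
    (fun t ht => by rw [mul_sub, mul_div_cancel₀ _ hk.ne']; linarith [h t ht])
  set C := exp (k * s) * (f s - ε / k)
  have hlower : ∀ t ≥ s, C * exp (-(k * t)) ≤ f t - ε / k := by
    intro t ht
    rw [exp_neg, ← div_eq_mul_inv, div_le_iff₀ (exp_pos _), mul_comm]
    exact hmono self_mem_Ici ht ht
  have hC : Tendsto (fun t => C * exp (-(k * t))) atTop (𝓝 0) := by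
    simpa using (tendsto_exp_neg_atTop_nhds_zero.comp (tendsto_id.const_mul_atTop hk)).const_mul C
  have := le_of_tendsto_of_tendsto hC (hlim.sub_const (ε / k)) (eventually_atTop.2 ⟨s, hlower⟩)
  rw [zero_sub, neg_nonneg] at this
  simpa using (div_le_iff₀ hk).1 this

theorem deriv_add_mul_nonpos_of_sq_mul_le_deriv2 {f f' f'' : ℝ → ℝ} {k t₀ : ℝ} (hk : 0 < k)
    (hf : ∀ t ≥ t₀, HasDerivAt f (f' t) t) (hf' : ∀ t ≥ t₀, HasDerivAt f' (f'' t) t)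
    (hlim : Tendsto f atTop (𝓝 0)) (hsq : ∀ t ≥ t₀, k ^ 2 * f t ≤ f'' t) :
    ∀ t ≥ t₀, f' t + k * f t ≤ 0 := by
  set h := fun t => f' t + k * f t
  have hmono : MonotoneOn (fun t => exp (-k * t) * h t) (Ici t₀) :=
    monotoneOn_exp_mul_mul (fun t ht => (hf' t ht).add ((hf t ht).const_mul k))
      (fun t ht => by linear_combination hsq t ht)
  intro s hs
  by_contra! hpos
  refine hpos.not_ge (nonpos_of_tendsto_zero_of_le_deriv_add_mul hk
    (fun t ht => hf t (hs.trans ht)) hlim fun t ht => ?_)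
  have hcancel : ∀ x, exp (k * x) * exp (-k * x) = 1 := fun x => by
    rw [← exp_add, neg_mul, add_neg_cancel, exp_zero]
  calc h s = exp (k * s) * (exp (-k * s) * h s) := by rw [← mul_assoc, hcancel, one_mul]
    _ ≤ exp (k * t) * (exp (-k * s) * h s) :=
        mul_le_mul_of_nonneg_right (exp_le_exp.2 (by nlinarith)) (by positivity)
    _ ≤ exp (k * t) * (exp (-k * t) * h t) :=
        mul_le_mul_of_nonneg_left (hmono hs (hs.trans ht) ht) (exp_pos _).le
    _ = h t := by rw [← mul_assoc, hcancel, one_mul]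

theorem le_mul_exp_neg_of_deriv_add_mul_nonpos {f f' : ℝ → ℝ} {k t₀ : ℝ}
    (hf : ∀ t ≥ t₀, HasDerivAt f (f' t) t) (h : ∀ t ≥ t₀, f' t + k * f t ≤ 0) :
    ∀ t ≥ t₀, f t ≤ exp (k * t₀) * f t₀ * exp (-k * t) := by
  intro t ht
  calc f t = exp (k * t) * f t * exp (-k * t) := by
        rw [mul_right_comm, ← exp_add, neg_mul, add_neg_cancel, exp_zero, one_mul]
    _ ≤ exp (k * t₀) * f t₀ * exp (-k * t) :=
        mul_le_mul_of_nonneg_right (antitoneOn_exp_mul_mul hf h self_mem_Ici ht ht) (exp_pos _).le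

theorem stmt14_general (c t₀ : ℝ) (hc : 0 < c) (g : ℝ → ℝ)
    (hg1 : ∀ t ≥ t₀, DifferentiableAt ℝ g t)
    (hg2 : ∀ t ≥ t₀, DifferentiableAt ℝ (deriv g) t)
    (hlim : Filter.Tendsto g Filter.atTop (nhds 0))
    (hineq : ∀ t ≥ t₀, 4 * c ^ 2 * g t ≤ deriv (deriv g) t) :
    ∃ t₁ ≥ t₀, ∃ B ≥ (0 : ℝ), ∀ t ≥ t₁, g t ≤ B * Real.exp (-2 * c * t) := by
  have hg : ∀ t ≥ t₀, HasDerivAt g (deriv g t) t := fun t ht => (hg1 t ht).hasDerivAt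
  have hg' : ∀ t ≥ t₀, HasDerivAt (deriv g) (deriv (deriv g) t) t :=
    fun t ht => (hg2 t ht).hasDerivAt
  have hsq : ∀ t ≥ t₀, (2 * c) ^ 2 * g t ≤ deriv (deriv g) t := fun t ht => by
    linear_combination hineq t ht
  have hdecay := le_mul_exp_neg_of_deriv_add_mul_nonpos hg
    (deriv_add_mul_nonpos_of_sq_mul_le_deriv2 (by positivity) hg hg' hlim hsq)
  refine ⟨t₀, le_rfl, max 0 (exp (2 * c * t₀) * g t₀), le_max_left _ _, fun t ht => ?_⟩
  calc g t ≤ exp (2 * c * t₀) * g t₀ * exp (-(2 * c) * t) := hdecay t ht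
    _ ≤ max 0 (exp (2 * c * t₀) * g t₀) * exp (-2 * c * t) := by
        rw [neg_mul_eq_neg_mul]
        gcongr
        exact le_max_right _ _

/-- If `g ≥ 0` is twice differentiable on `[t₀, ∞)`, tends to `0` at `+∞`, and
satisfies `g'' ≥ 4c²·g` there (with `c > 0`), then `g` decays exponentially:
`g t ≤ B·exp (-2c·t)` for all large `t`. -/
theorem stmt14 (c t₀ : ℝ) (hc : 0 < c) (g : ℝ → ℝ)
    (hg1 : ∀ t ≥ t₀, DifferentiableAt ℝ g t)
    (hg2 : ∀ t ≥ t₀, DifferentiableAt ℝ (deriv g) t)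
    (hpos : ∀ t ≥ t₀, 0 ≤ g t)
    (hlim : Filter.Tendsto g Filter.atTop (nhds 0))
    (hineq : ∀ t ≥ t₀, 4 * c ^ 2 * g t ≤ deriv (deriv g) t) :
    ∃ t₁ ≥ t₀, ∃ B ≥ (0 : ℝ), ∀ t ≥ t₁, g t ≤ B * Real.exp (-2 * c * t) :=
  stmt14_general c t₀ hc g hg1 hg2 hlim hineq
end

section
/- Let E be a complete real inner product space, f : E → ℝ a differentiable function with gradient ∇f, and L > 0. Let t' < t be real numbers and c : ℝ → E a curve differentiable on [t', t] satisfying the negative gradient equation c'(s) = −∇f(c(s)) for all s ∈ [t', t]. Suppose that 1/L ≤ ‖∇f(c(s))‖ ≤ L for all s ∈ [t', t], and that ‖c(t) − c(t')‖ > 1/L. Then f(c(t')) − f(c(t)) > 1/L⁴. -/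
/-!
Along the negative gradient flow, `f ∘ c` decreases at rate `‖∇f (c s)‖² ≥ 1/L²`, while `c`
moves at speed `‖∇f (c s)‖ ≤ L`. Covering a distance greater than `1/L` therefore takes time
`t - t' > 1/L²`, during which `f` drops by at least `(t - t')/L² > 1/L⁴`.
-/

open Set
open scoped RealInnerProductSpace

section GradientFlow

variable {E : Type*} [NormedAddCommGroup E] [InnerProductSpace ℝ E] [CompleteSpace E]
  {f : E → ℝ} {c : ℝ → E}

theorem HasGradientAt.hasDerivAt_comp {g v : E} {s : ℝ}
    (hf : HasGradientAt f g (c s)) (hc : HasDerivAt c v s) :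
    HasDerivAt (fun u => f (c u)) ⟪g, v⟫ s :=
  (hf.hasFDerivAt.comp_hasDerivAt s hc).congr_deriv InnerProductSpace.toDual_apply_apply

theorem hasDerivAt_comp_of_gradient_flow {s : ℝ}
    (hf : DifferentiableAt ℝ f (c s)) (hc : HasDerivAt c (-gradient f (c s)) s) :
    HasDerivAt (fun u => f (c u)) (-‖gradient f (c s)‖ ^ 2) s := by
  simpa only [inner_neg_right, real_inner_self_eq_norm_sq] using
    hf.hasGradientAt.hasDerivAt_comp hc

variable {a b : ℝ}

theorem norm_sub_le_of_gradient_flow {L : ℝ} (hab : a ≤ b)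
    (hc : ∀ s ∈ Icc a b, HasDerivAt c (-gradient f (c s)) s)
    (hup : ∀ s ∈ Icc a b, ‖gradient f (c s)‖ ≤ L) :
    ‖c b - c a‖ ≤ L * (b - a) := by
  have := (convex_Icc a b).norm_image_sub_le_of_norm_hasDerivWithin_le
    (fun s hs => (hc s hs).hasDerivWithinAt)
    (fun s hs => (norm_neg (gradient f (c s))).trans_le (hup s hs))
    (left_mem_Icc.2 hab) (right_mem_Icc.2 hab)
  rwa [Real.norm_of_nonneg (sub_nonneg.2 hab)] at this

theorem mul_sub_le_sub_of_gradient_flow {μ : ℝ} (hμ : 0 ≤ μ) (hab : a ≤ b)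
    (hf : Differentiable ℝ f) (hc : ∀ s ∈ Icc a b, HasDerivAt c (-gradient f (c s)) s)
    (hlow : ∀ s ∈ Icc a b, μ ≤ ‖gradient f (c s)‖) :
    μ ^ 2 * (b - a) ≤ f (c a) - f (c b) := by
  have hderiv s (hs : s ∈ Icc a b) := hasDerivAt_comp_of_gradient_flow (hf (c s)) (hc s hs)
  have hdrop := (convex_Icc a b).image_sub_le_mul_sub_of_deriv_le (C := -μ ^ 2)
    (fun s hs => (hderiv s hs).continuousAt.continuousWithinAt)
    (fun s hs => (hderiv s (interior_subset hs)).differentiableAt.differentiableWithinAt)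
    (fun s hs => by
      rw [(hderiv s (interior_subset hs)).deriv, neg_le_neg_iff]
      exact pow_le_pow_left₀ hμ (hlow s (interior_subset hs)) 2)
    a (left_mem_Icc.2 hab) b (right_mem_Icc.2 hab) hab
  linarith

end GradientFlow

/-- Crossing-energy estimate.  Let `f` be a differentiable function on a real Hilbert
space and `c` a negative gradient trajectory on `[t', t]`.  If `1/L ≤ ‖∇f (c s)‖ ≤ L`
on `[t', t]` and `‖c t - c t'‖ > 1/L`, then `f (c t') - f (c t) > 1/L⁴`. -/
theorem stmt15 {E : Type*} [NormedAddCommGroup E] [InnerProductSpace ℝ E]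
    [CompleteSpace E]
    (f : E → ℝ) (hf : Differentiable ℝ f)
    (L : ℝ) (hL : 0 < L)
    (t' t : ℝ) (htt : t' < t)
    (c : ℝ → E)
    (hode : ∀ s ∈ Set.Icc t' t, HasDerivAt c (-(gradient f (c s))) s)
    (hlow : ∀ s ∈ Set.Icc t' t, 1 / L ≤ ‖gradient f (c s)‖)
    (hup : ∀ s ∈ Set.Icc t' t, ‖gradient f (c s)‖ ≤ L)
    (hdist : 1 / L < ‖c t - c t'‖) :
    1 / L ^ 4 < f (c t') - f (c t) := by
  have htime : 1 / L < L * (t - t') :=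
    hdist.trans_le (norm_sub_le_of_gradient_flow htt.le hode hup)
  have henergy := mul_sub_le_sub_of_gradient_flow (by positivity) htt.le hf hode hlow
  have htime' : 1 / L ^ 2 < t - t' := by
    rw [div_lt_iff₀ hL] at htime
    rw [div_lt_iff₀ (by positivity)]
    nlinarith
  calc 1 / L ^ 4 = (1 / L) ^ 2 * (1 / L ^ 2) := by ring
    _ < (1 / L) ^ 2 * (t - t') := by gcongr
    _ ≤ f (c t') - f (c t) := henergy
end

section
/- Fix integers n ≥ 0, N ≥ 1, m ≥ 1, and positive integers k₁, …, k_m with k = k₁ + … + k_m. Let S : ℤ → ((ℝ^n × ℝ^n) → ℝ) be an N-periodic family of functions (S_{i+N} = S_i for all i ∈ ℤ). For a positive integer l, define the discrete action functional 𝔸_l on discrete loops z : ℤ/(lN)ℤ → ℝ^n × ℝ^n, writing z_i = (x_i, y_i), by 𝔸_l(z) = Σ_{i ∈ ℤ/(lN)ℤ} ( ⟨x_i, y_{i+1} − y_i⟩ + S_i(x_i, y_{i+1}) ), which is well defined by N-periodicity of S. Given a discrete loop z : ℤ/(kN)ℤ → ℝ^n × ℝ^n, for each l = 1, …, m let z^{(l)}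 : ℤ/(k_lN)ℤ → ℝ^n × ℝ^n denote the l-th block of z, i.e. z^{(l)}_i = z_{(k₁+…+k_{l−1})N + i}. If z satisfies the matching condition y_1 = y_{k₁N+1} = y_{(k₁+k₂)N+1} = … = y_{(k₁+…+k_{m−1})N+1}, then 𝔸_k(z) = 𝔸_{k₁}(z^{(1)}) + 𝔸_{k₂}(z^{(2)}) + … + 𝔸_{k_m}(z^{(m)}). -/
open scoped RealInnerProductSpace

noncomputable def discreteAction (n : ℕ)
    (S : ℕ → EuclideanSpace ℝ (Fin n) × EuclideanSpace ℝ (Fin n) → ℝ)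
    (L : ℕ) (z : ZMod L → EuclideanSpace ℝ (Fin n) × EuclideanSpace ℝ (Fin n)) : ℝ :=
  ∑ i ∈ Finset.range L,
    (⟪(z (i : ZMod L)).1, (z ((i + 1 : ℕ) : ZMod L)).2 - (z (i : ZMod L)).2⟫ +
      S i ((z (i : ZMod L)).1, (z ((i + 1 : ℕ) : ZMod L)).2))

lemma Iio_succ_fin {M : Type*} [AddCommMonoid M] {m : ℕ} (L : Fin (m+1) → M) (l : Fin m) :
    ∑ j ∈ Finset.Iio (Fin.succ l), L j = L 0 + ∑ j ∈ Finset.Iio l, L (Fin.succ j) := by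
  classical
  rw [show Finset.Iio (Fin.succ l) = Finset.univ.filter (· < Fin.succ l) from by ext j; simp]
  rw [Finset.sum_filter, Fin.sum_univ_succ]
  simp only [Fin.succ_lt_succ_iff, Fin.succ_pos, if_true]
  rw [← Finset.sum_filter, show Finset.univ.filter (· < l) = Finset.Iio l from by ext j; simp]

lemma sum_range_fin_sum {M : Type*} [AddCommMonoid M] :
    ∀ (m : ℕ) (L : Fin m → ℕ) (F : ℕ → M),
    ∑ i ∈ Finset.range (∑ l, L l), F i
      = ∑ l, ∑ i ∈ Finset.range (L l), F ((∑ j ∈ Finset.Iio l, L j) + i) := by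
  intro m
  induction m with
  | zero => intro L F; simp
  | succ m ih =>
    intro L F
    rw [Fin.sum_univ_succ, Finset.sum_range_add, ih (fun l => L l.succ) (fun i => F (L 0 + i))]
    rw [Fin.sum_univ_succ]
    congr 1
    · refine Finset.sum_congr rfl fun i _ => ?_
      congr 1
      simp
    · refine Finset.sum_congr rfl fun l _ => Finset.sum_congr rfl fun i _ => ?_
      congr 1
      have := Iio_succ_fin L l
      omega

/-- Let `S` be an `N`-periodic family of functions, `k = k₁ + ⋯ + k_m`, and let
`z : ℤ/(kN)ℤ → ℝ^n × ℝ^n` be a discrete loop whose `y`-components agree at the block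
starting points `0, k₁N, (k₁+k₂)N, …`.  Then the discrete action of `z` in period `k`
equals the sum of the discrete actions of the blocks `z^{(l)}` in periods `k_l`,
where `z^{(l)}_i = z_{(k₁+⋯+k_{l-1})N + i}`. -/
theorem stmt19 (n N m : ℕ) (hN : 1 ≤ N) (hm : 1 ≤ m)
    (kv : Fin m → ℕ) (hkv : ∀ l, 1 ≤ kv l)
    (S : ℕ → EuclideanSpace ℝ (Fin n) × EuclideanSpace ℝ (Fin n) → ℝ)
    (hS : ∀ i, S (i + N) = S i)
    (k : ℕ) (hk : k = ∑ l, kv l)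
    (z : ZMod (k * N) → EuclideanSpace ℝ (Fin n) × EuclideanSpace ℝ (Fin n))
    (hmatch : ∀ l : Fin m,
      (z (((∑ j ∈ Finset.Iio l, kv j) * N : ℕ) : ZMod (k * N))).2
        = (z ((0 : ℕ) : ZMod (k * N))).2) :
    discreteAction n S (k * N) z
      = ∑ l : Fin m,
          discreteAction n S (kv l * N)
            (fun i => z ((((∑ j ∈ Finset.Iio l, kv j) * N + i.val : ℕ)) : ZMod (k * N))) := by
  have hSper : ∀ a i, S (a * N + i) = S i := by
    intro a
    induction a with
    | zero => simp
    | succ a ih =>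
      intro i
      have h : (a + 1) * N + i = (a * N + i) + N := by ring
      rw [h, hS, ih]
  have hbound : ∀ l : Fin m,
      (z ((((∑ j ∈ Finset.Iio l, kv j) + kv l) * N : ℕ) : ZMod (k * N))).2
        = (z ((0 : ℕ) : ZMod (k * N))).2 := by
    intro l
    by_cases h : l.val + 1 < m
    · have hins : Finset.Iio (⟨l.val + 1, h⟩ : Fin m) = insert l (Finset.Iio l) := by
        ext j
        simp only [Finset.mem_Iio, Finset.mem_insert, Fin.lt_def, Fin.ext_iff]
        omega
      have hsum : ∑ j ∈ Finset.Iio (⟨l.val + 1, h⟩ : Fin m), kv j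
          = (∑ j ∈ Finset.Iio l, kv j) + kv l := by
        rw [hins, Finset.sum_insert (by simp)]
        ring
      rw [← hsum]
      exact hmatch _
    · have hl : l.val + 1 = m := by omega
      have huniv : insert l (Finset.Iio l) = (Finset.univ : Finset (Fin m)) := by
        ext j
        simp only [Finset.mem_Iio, Finset.mem_insert, Fin.lt_def, Fin.ext_iff,
          Finset.mem_univ, iff_true]
        omega
      have hksum : (∑ j ∈ Finset.Iio l, kv j) + kv l = k := by
        rw [hk, ← huniv, Finset.sum_insert (by simp)]
        ring
      rw [hksum]
      simp [ZMod.natCast_self]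
  unfold discreteAction
  rw [show Finset.range (k * N) = Finset.range (∑ l, kv l * N) from by
    rw [hk, Finset.sum_mul]]
  rw [sum_range_fin_sum]
  refine Finset.sum_congr rfl fun l _ => ?_
  rw [show (∑ j ∈ Finset.Iio l, kv j * N) = (∑ j ∈ Finset.Iio l, kv j) * N from
    (Finset.sum_mul _ _ _).symm]
  set a := ∑ j ∈ Finset.Iio l, kv j with ha
  set L := kv l * N with hL
  have hLpos : 0 < L := Nat.mul_pos (hkv l) hN
  haveI : NeZero L := ⟨hLpos.ne'⟩
  refine Finset.sum_congr rfl fun i hi => ?_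
  rw [Finset.mem_range] at hi
  have hival : ((i : ZMod L)).val = i := ZMod.val_cast_of_lt hi
  have hy : (z (((a * N + i + 1 : ℕ)) : ZMod (k * N))).2
      = (z (((a * N + ((i + 1 : ℕ) : ZMod L).val : ℕ)) : ZMod (k * N))).2 := by
    by_cases h1 : i + 1 < L
    · rw [ZMod.val_cast_of_lt h1, ← Nat.add_assoc]
    · have h2 : i + 1 = L := by omega
      rw [h2, ZMod.natCast_self, ZMod.val_zero, Nat.add_zero]
      have e1 : a * N + i + 1 = (a + kv l) * N := by
        rw [add_mul]
        omega
      rw [e1, hbound l, Nat.add_zero]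
      exact (hmatch l).symm
  simp only [hival]
  rw [← hy, hSper a i, Nat.add_assoc] -- ? maybe need index normalization
end
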